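/- Let M ∈ ℝ^{d×d} be symmetric positive definite with eigenvalues β1 > β2 ≥ … ≥ βd > 0 satisfying 2β2 ≤ β1, and a corresponding orthonormal basis of eigenvectors p1, …, pd. Let r0, r1, r2, … be a sequence of nonzero vectors in ℝ^d with p1ᵀ r0 ≠ 0 such that for every t there exists ε_t ≥ 0 with ε_t ≤ min( Σ_{i=2}^d ξi(r_t)²/βi , ξ1(r_t)²/β1 ) · (β1 − β2)² / 32 and √( (r_{t+1} − M r_t)ᵀ M^{-1} (r_{t+1} − M r_t) ) ≤ √(2 ε_t)·‖r_t‖, where ξi(r) = piᵀ r / ‖r‖ and G(r) = √( Σ_{i=2}^d ξi(r)²/βi ) / √( ξ1(r)²/β1 ). Then for every η ∈ (0,1) and every t ≥ 0 with (5/7)^t · G(r0) ≤ η, one has p1ᵀ r_t ≠ 0 and √( Σ_{i=2}^d ξi(r_t)² ) ≤ G(r_t) ≤ η. -/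

import Mathlib

open Matrix Finset

/-- Euclidean norm of a vector in `ℝ^d`. -/
noncomputable def vnorm {n : Type*} [Fintype n] (x : n → ℝ) : ℝ := Real.sqrt (x ⬝ᵥ x)

/-- Coefficient of the normalized vector `r/‖r‖` along the eigenvector `p i`. -/
noncomputable def xi {d : ℕ} (p : Fin (d+2) → Fin (d+2) → ℝ) (r : Fin (d+2) → ℝ)
    (i : Fin (d+2)) : ℝ :=
  (p i ⬝ᵥ r) / vnorm r

/-- The potential function
`G(r) = √(Σ_{i≥2} ξᵢ(r)²/βᵢ) / √(ξ₁(r)²/β₁)`. -/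
noncomputable def Gpot {d : ℕ} (β : Fin (d+2) → ℝ) (p : Fin (d+2) → Fin (d+2) → ℝ)
    (r : Fin (d+2) → ℝ) : ℝ :=
  Real.sqrt (∑ i ∈ Finset.univ.erase 0, (xi p r i) ^ 2 / β i) /
    Real.sqrt ((xi p r 0) ^ 2 / β 0)

set_option maxHeartbeats 4000000

lemma mink {ι : Type*} (s : Finset ι) (a b : ι → ℝ) :
    Real.sqrt (∑ i ∈ s, (a i + b i)^2) ≤
      Real.sqrt (∑ i ∈ s, a i ^2) + Real.sqrt (∑ i ∈ s, b i ^2) := by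
  have hcs := Finset.sum_mul_sq_le_sq_mul_sq s a b
  have h1 : (∑ i ∈ s, a i * b i) ≤ Real.sqrt (∑ i ∈ s, a i ^2) * Real.sqrt (∑ i ∈ s, b i ^2) := by
    calc (∑ i ∈ s, a i * b i) ≤ |∑ i ∈ s, a i * b i| := le_abs_self _
    _ ≤ Real.sqrt ((∑ i ∈ s, a i ^2) * (∑ i ∈ s, b i ^2)) := by
        rw [← Real.sqrt_sq_eq_abs]
        exact Real.sqrt_le_sqrt hcs
    _ = _ := Real.sqrt_mul (by positivity) _
  have key : (∑ i ∈ s, (a i + b i)^2) ≤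
      (Real.sqrt (∑ i ∈ s, a i ^2) + Real.sqrt (∑ i ∈ s, b i ^2))^2 := by
    have ha : Real.sqrt (∑ i ∈ s, a i ^2) ^ 2 = ∑ i ∈ s, a i ^2 :=
      Real.sq_sqrt (by positivity)
    have hb : Real.sqrt (∑ i ∈ s, b i ^2) ^ 2 = ∑ i ∈ s, b i ^2 :=
      Real.sq_sqrt (by positivity)
    have : (∑ i ∈ s, (a i + b i)^2) = (∑ i ∈ s, a i ^2) + 2*(∑ i ∈ s, a i * b i) + ∑ i ∈ s, b i ^2 := by
      rw [Finset.mul_sum, ← Finset.sum_add_distrib, ← Finset.sum_add_distrib]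
      exact Finset.sum_congr rfl fun i _ => by ring
    rw [this]; nlinarith [h1]
  calc Real.sqrt (∑ i ∈ s, (a i + b i)^2) ≤ Real.sqrt ((Real.sqrt (∑ i ∈ s, a i ^2) + Real.sqrt (∑ i ∈ s, b i ^2))^2) := Real.sqrt_le_sqrt key
  _ = _ := Real.sqrt_sq (by positivity)

lemma vnorm_pos {n : Type*} [Fintype n] {x : n → ℝ} (hx : x ≠ 0) : 0 < vnorm x := by
  apply Real.sqrt_pos.mpr
  have h0 : 0 ≤ x ⬝ᵥ x := Finset.sum_nonneg fun i _ => mul_self_nonneg _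
  rcases lt_or_eq_of_le h0 with h | h
  · exact h
  · exact absurd (dotProduct_self_eq_zero.mp h.symm) hx

lemma xi_sq_div {d : ℕ} (p : Fin (d+2) → Fin (d+2) → ℝ) (r : Fin (d+2) → ℝ)
    (i : Fin (d+2)) (c : ℝ) : (xi p r i) ^ 2 / c = ((p i ⬝ᵥ r)^2 / c) / (vnorm r)^2 := by
  unfold xi
  rw [div_pow]
  ring

lemma Gpot_eq {d : ℕ} (β : Fin (d+2) → ℝ) (p : Fin (d+2) → Fin (d+2) → ℝ)
    {r : Fin (d+2) → ℝ} (hr : r ≠ 0) :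
    Gpot β p r = Real.sqrt (∑ i ∈ Finset.univ.erase 0, (p i ⬝ᵥ r) ^ 2 / β i) /
      Real.sqrt ((p 0 ⬝ᵥ r) ^ 2 / β 0) := by
  have hn := vnorm_pos hr
  unfold Gpot
  rw [Finset.sum_congr rfl (fun i _ => xi_sq_div p r i (β i)), xi_sq_div p r 0 (β 0),
    ← Finset.sum_div]
  have hs : ∀ y : ℝ, Real.sqrt (y / vnorm r ^ 2) = Real.sqrt y / vnorm r := by
    intro y
    rw [div_eq_mul_inv, Real.sqrt_mul' _ (by positivity), Real.sqrt_inv,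
      Real.sqrt_sq hn.le, ← div_eq_mul_inv]
  rw [hs, hs, div_div_div_cancel_right₀ hn.ne']

section
variable {d : ℕ} (M : Matrix (Fin (d+2)) (Fin (d+2)) ℝ) (hM : M.PosDef)
  (β : Fin (d+2) → ℝ) (p : Fin (d+2) → Fin (d+2) → ℝ)
  (hβpos : ∀ i, 0 < β i)
  (horth : ∀ i j, p i ⬝ᵥ p j = if i = j then 1 else 0)
  (heig : ∀ i, M.mulVec (p i) = β i • p i)

include horth in
lemma parseval : ∀ v w : Fin (d+2) → ℝ, v ⬝ᵥ w = ∑ i, (p i ⬝ᵥ v) * (p i ⬝ᵥ w) := by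
  intro v w
  set P : Matrix (Fin (d+2)) (Fin (d+2)) ℝ := Matrix.of p with hP
  have hPP : P * Pᵀ = 1 := by
    ext i j
    simp only [Matrix.mul_apply, Matrix.transpose_apply, Matrix.one_apply, hP, Matrix.of_apply]
    rw [← horth i j]
    rfl
  have hPtP : Pᵀ * P = 1 := mul_eq_one_comm.mp hPP
  have hmv : ∀ x : Fin (d+2) → ℝ, P *ᵥ x = fun i => p i ⬝ᵥ x := fun x => rfl
  calc v ⬝ᵥ w = ((Pᵀ * P) *ᵥ v) ⬝ᵥ w := by rw [hPtP, Matrix.one_mulVec]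
  _ = (Pᵀ *ᵥ (P *ᵥ v)) ⬝ᵥ w := by rw [Matrix.mulVec_mulVec]
  _ = (P *ᵥ v) ⬝ᵥ (P *ᵥ w) := by
      rw [Matrix.mulVec_transpose, ← Matrix.dotProduct_mulVec]
  _ = ∑ i, (p i ⬝ᵥ v) * (p i ⬝ᵥ w) := by rw [hmv, hmv]; rfl

include hM heig in
lemma coordM : ∀ (i : Fin (d+2)) (v : Fin (d+2) → ℝ),
    p i ⬝ᵥ (M *ᵥ v) = β i * (p i ⬝ᵥ v) := by
  intro i v
  have hsym : Mᵀ = M := hM.isHermitian.eq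
  rw [Matrix.dotProduct_mulVec, ← Matrix.mulVec_transpose, hsym, heig,
    smul_dotProduct, smul_eq_mul]

include hM heig hβpos in
lemma coordMinv : ∀ (i : Fin (d+2)) (v : Fin (d+2) → ℝ),
    p i ⬝ᵥ (M⁻¹ *ᵥ v) = (p i ⬝ᵥ v) / β i := by
  intro i v
  have hdet : IsUnit M.det := isUnit_iff_ne_zero.mpr hM.det_pos.ne'
  have hsym : Mᵀ = M := hM.isHermitian.eq
  have hinv : M⁻¹ *ᵥ p i = (β i)⁻¹ • p i := by
    have h1 : M⁻¹ *ᵥ (M *ᵥ p i) = p i := by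
      rw [Matrix.mulVec_mulVec, Matrix.nonsing_inv_mul M hdet, Matrix.one_mulVec]
    rw [heig, Matrix.mulVec_smul] at h1
    have hβ := (hβpos i).ne'
    calc M⁻¹ *ᵥ p i = (β i)⁻¹ • (β i • (M⁻¹ *ᵥ p i)) := by
          rw [smul_smul, inv_mul_cancel₀ hβ, one_smul]
    _ = (β i)⁻¹ • p i := by rw [h1]
  have hsyminv : (M⁻¹)ᵀ = M⁻¹ := by rw [Matrix.transpose_nonsing_inv, hsym]
  rw [Matrix.dotProduct_mulVec, ← Matrix.mulVec_transpose, hsyminv, hinv,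
    smul_dotProduct, smul_eq_mul, div_eq_inv_mul]

include hM hβpos horth heig in
lemma step (hanti : Antitone β) (hgap : β 1 < β 0) (hhalf : 2 * β 1 ≤ β 0)
    (u v : Fin (d+2) → ℝ) (hu : u ≠ 0) (hc0 : p 0 ⬝ᵥ u ≠ 0)
    (ε : ℝ) (hε0 : 0 ≤ ε)
    (hεle : ε ≤ min (∑ i ∈ Finset.univ.erase 0, (xi p u i) ^ 2 / β i)
              ((xi p u 0) ^ 2 / β 0) * (β 0 - β 1) ^ 2 / 32)
    (herr : Real.sqrt ((v - M.mulVec u) ⬝ᵥ (M⁻¹).mulVec (v - M.mulVec u))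
          ≤ Real.sqrt (2 * ε) * vnorm u) :
    p 0 ⬝ᵥ v ≠ 0 ∧ Gpot β p v ≤ 5/7 * Gpot β p u := by
  set n := vnorm u with hn
  have hnpos : 0 < n := vnorm_pos hu
  set e := v - M.mulVec u with he
  set A := ∑ i ∈ Finset.univ.erase 0, (p i ⬝ᵥ u) ^ 2 / β i with hA
  set B := (p 0 ⬝ᵥ u) ^ 2 / β 0 with hB
  have hA0 : 0 ≤ A := Finset.sum_nonneg fun i _ => div_nonneg (sq_nonneg _) (hβpos i).le
  have hB0 : 0 < B := div_pos (by positivity) (hβpos 0)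
  set E := Real.sqrt (e ⬝ᵥ (M⁻¹).mulVec e) with hE
  have hE0 : 0 ≤ E := Real.sqrt_nonneg _
  have hEsum : e ⬝ᵥ (M⁻¹).mulVec e = ∑ i, (p i ⬝ᵥ e) ^ 2 / β i := by
    rw [parseval p horth e ((M⁻¹).mulVec e)]
    exact Finset.sum_congr rfl fun i _ => by
      rw [coordMinv M hM β p hβpos heig i e, sq]
      ring
  have hEsum0 : 0 ≤ ∑ i, (p i ⬝ᵥ e) ^ 2 / β i :=
    Finset.sum_nonneg fun i _ => div_nonneg (sq_nonneg _) (hβpos i).le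
  have hE2 : E ^ 2 = ∑ i, (p i ⬝ᵥ e) ^ 2 / β i := by
    rw [hE, hEsum, Real.sq_sqrt hEsum0]
  have hxiA : (∑ i ∈ Finset.univ.erase 0, (xi p u i) ^ 2 / β i) = A / n ^ 2 := by
    rw [Finset.sum_congr rfl (fun i _ => xi_sq_div p u i (β i)), ← Finset.sum_div]
  have hxiB : (xi p u 0) ^ 2 / β 0 = B / n ^ 2 := xi_sq_div p u 0 (β 0)
  have hεle' : ε ≤ (min A B / n ^ 2) * (β 0 - β 1) ^ 2 / 32 := by
    rwa [hxiA, hxiB, min_div_div_right (by positivity : (0:ℝ) ≤ n ^ 2)] at hεle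
  have hgap4 : (0:ℝ) ≤ (β 0 - β 1) / 4 := by linarith
  have hminAB : 0 ≤ min A B := le_min hA0 hB0.le
  have hEbound : E ≤ (β 0 - β 1) / 4 * Real.sqrt (min A B) := by
    refine le_trans herr ?_
    have h2 : (Real.sqrt (2 * ε) * n) ^ 2 ≤ ((β 0 - β 1) / 4 * Real.sqrt (min A B)) ^ 2 := by
      rw [mul_pow, Real.sq_sqrt (by linarith : (0:ℝ) ≤ 2*ε), mul_pow,
        Real.sq_sqrt hminAB]
      have h3 : 2 * ε * n ^ 2 ≤ 2 * ((min A B / n ^ 2) * (β 0 - β 1) ^ 2 / 32) * n ^ 2 := by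
        have h4 : ε * n ^ 2 ≤ ((min A B / n ^ 2) * (β 0 - β 1) ^ 2 / 32) * n ^ 2 :=
          mul_le_mul_of_nonneg_right hεle' (sq_nonneg n)
        linarith
      calc 2 * ε * n ^ 2 ≤ 2 * ((min A B / n ^ 2) * (β 0 - β 1) ^ 2 / 32) * n ^ 2 := h3
      _ = ((β 0 - β 1) / 4) ^ 2 * min A B := by
          field_simp
          ring
    exact (pow_le_pow_iff_left₀ (mul_nonneg (Real.sqrt_nonneg _) hnpos.le) (mul_nonneg hgap4 (Real.sqrt_nonneg _)) two_ne_zero).mp h2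
  have hEA : E ≤ (β 0 - β 1) / 4 * Real.sqrt A := by
    refine hEbound.trans ?_
    gcongr
    exact min_le_left _ _
  have hEB : E ≤ (β 0 - β 1) / 4 * Real.sqrt B := by
    refine hEbound.trans ?_
    gcongr
    exact min_le_right _ _
  have hcv : ∀ i, p i ⬝ᵥ v = β i * (p i ⬝ᵥ u) + p i ⬝ᵥ e := by
    intro i
    have hv : v = M.mulVec u + e := by rw [he]; abel
    rw [hv, dotProduct_add, coordM M hM β p heig i u]
  -- numerator
  set A' := ∑ i ∈ Finset.univ.erase 0, (p i ⬝ᵥ v) ^ 2 / β i with hA'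
  have hA'0 : 0 ≤ A' := Finset.sum_nonneg fun i _ => div_nonneg (sq_nonneg _) (hβpos i).le
  have hnum : Real.sqrt A' ≤ (β 0 + 3 * β 1) / 4 * Real.sqrt A := by
    have hbig : A' = ∑ i ∈ Finset.univ.erase 0,
        ((β i * (p i ⬝ᵥ u)) / Real.sqrt (β i) + (p i ⬝ᵥ e) / Real.sqrt (β i)) ^ 2 := by
      refine Finset.sum_congr rfl fun i _ => ?_
      rw [hcv i, ← add_div, div_pow, Real.sq_sqrt (hβpos i).le]
    have hm := mink (Finset.univ.erase 0) (fun i => (β i * (p i ⬝ᵥ u)) / Real.sqrt (β i))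
        (fun i => (p i ⬝ᵥ e) / Real.sqrt (β i))
    rw [← hbig] at hm
    have ha2 : (∑ i ∈ Finset.univ.erase 0, ((β i * (p i ⬝ᵥ u)) / Real.sqrt (β i)) ^ 2)
        ≤ β 1 ^ 2 * A := by
      rw [hA, Finset.mul_sum]
      refine Finset.sum_le_sum fun i hi => ?_
      have hi0 : i ≠ 0 := (Finset.mem_erase.mp hi).1
      have h1i : (1 : Fin (d+2)) ≤ i := by
        have hpos : (0 : Fin (d+2)) < i := Fin.pos_iff_ne_zero.mpr hi0
        rw [Fin.le_def, Fin.val_one]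
        rw [Fin.lt_def] at hpos
        omega
      have hβi1 : β i ≤ β 1 := hanti h1i
      rw [div_pow, Real.sq_sqrt (hβpos i).le, ← mul_div_assoc]
      gcongr (?_ / _)
      · exact (hβpos i).le
      · have key : 0 ≤ (β 1 - β i) * (β 1 + β i) * (p i ⬝ᵥ u) ^ 2 :=
          mul_nonneg (mul_nonneg (by linarith) (by linarith [hβpos i])) (sq_nonneg _)
        nlinarith [key]
    have hsa : Real.sqrt (∑ i ∈ Finset.univ.erase 0, ((β i * (p i ⬝ᵥ u)) / Real.sqrt (β i)) ^ 2)
        ≤ β 1 * Real.sqrt A := by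
      calc _ ≤ Real.sqrt (β 1 ^ 2 * A) := Real.sqrt_le_sqrt ha2
      _ = β 1 * Real.sqrt A := by
          rw [Real.sqrt_mul (sq_nonneg _), Real.sqrt_sq (hβpos 1).le]
    have hb2 : (∑ i ∈ Finset.univ.erase 0, ((p i ⬝ᵥ e) / Real.sqrt (β i)) ^ 2) ≤ E ^ 2 := by
      rw [hE2]
      have : ∀ i, ((p i ⬝ᵥ e) / Real.sqrt (β i)) ^ 2 = (p i ⬝ᵥ e) ^ 2 / β i := by
        intro i; rw [div_pow, Real.sq_sqrt (hβpos i).le]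
      rw [Finset.sum_congr rfl fun i _ => this i]
      exact Finset.sum_le_sum_of_subset_of_nonneg (Finset.subset_univ _)
        (fun i _ _ => div_nonneg (sq_nonneg _) (hβpos i).le)
    have hsb : Real.sqrt (∑ i ∈ Finset.univ.erase 0, ((p i ⬝ᵥ e) / Real.sqrt (β i)) ^ 2) ≤ E := by
      calc _ ≤ Real.sqrt (E ^ 2) := Real.sqrt_le_sqrt hb2
      _ = E := Real.sqrt_sq hE0
    have hid : (β 0 + 3 * β 1) / 4 * Real.sqrt A
        = β 1 * Real.sqrt A + (β 0 - β 1) / 4 * Real.sqrt A := by ring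
    rw [hid]
    linarith [hm, hsa, hsb, hEA]
  -- denominator
  have habs0 : |p 0 ⬝ᵥ e| ≤ (β 0 - β 1) / 4 * |p 0 ⬝ᵥ u| := by
    have h1 : (p 0 ⬝ᵥ e) ^ 2 / β 0 ≤ E ^ 2 := by
      rw [hE2]
      exact Finset.single_le_sum (f := fun i => (p i ⬝ᵥ e) ^ 2 / β i)
        (fun i _ => div_nonneg (sq_nonneg _) (hβpos i).le) (Finset.mem_univ 0)
    have h2 : |p 0 ⬝ᵥ e| ≤ Real.sqrt (β 0) * E := by
      have h3 : (p 0 ⬝ᵥ e) ^ 2 ≤ β 0 * E ^ 2 := by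
        rw [div_le_iff₀ (hβpos 0)] at h1
        linarith
      calc |p 0 ⬝ᵥ e| = Real.sqrt ((p 0 ⬝ᵥ e) ^ 2) := (Real.sqrt_sq_eq_abs _).symm
      _ ≤ Real.sqrt (β 0 * E ^ 2) := Real.sqrt_le_sqrt h3
      _ = Real.sqrt (β 0) * E := by rw [Real.sqrt_mul (hβpos 0).le, Real.sqrt_sq hE0]
    have hsB : Real.sqrt B = |p 0 ⬝ᵥ u| / Real.sqrt (β 0) := by
      rw [hB, Real.sqrt_div (sq_nonneg _), Real.sqrt_sq_eq_abs]
    have hsβ0 : (0:ℝ) < Real.sqrt (β 0) := Real.sqrt_pos.mpr (hβpos 0)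
    calc |p 0 ⬝ᵥ e| ≤ Real.sqrt (β 0) * E := h2
    _ ≤ Real.sqrt (β 0) * ((β 0 - β 1) / 4 * Real.sqrt B) := by
        exact mul_le_mul_of_nonneg_left hEB hsβ0.le
    _ = (β 0 - β 1) / 4 * |p 0 ⬝ᵥ u| := by
        rw [hsB]
        field_simp
  have hden : (3 * β 0 + β 1) / 4 * |p 0 ⬝ᵥ u| ≤ |p 0 ⬝ᵥ v| := by
    have h3 : |β 0 * (p 0 ⬝ᵥ u)| - |p 0 ⬝ᵥ e| ≤ |p 0 ⬝ᵥ v| := by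
      rw [hcv 0]
      have := abs_add_le (β 0 * (p 0 ⬝ᵥ u) + p 0 ⬝ᵥ e) (-(p 0 ⬝ᵥ e))
      simp only [add_neg_cancel_right, abs_neg] at this
      linarith
    have h4 : |β 0 * (p 0 ⬝ᵥ u)| = β 0 * |p 0 ⬝ᵥ u| := by
      rw [abs_mul, abs_of_pos (hβpos 0)]
    rw [h4] at h3
    linarith [habs0]
  have habspos : 0 < |p 0 ⬝ᵥ u| := abs_pos.mpr hc0
  have hvc0 : p 0 ⬝ᵥ v ≠ 0 := by
    intro h
    rw [h, abs_zero] at hden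
    have hp : (0:ℝ) < (3 * β 0 + β 1) / 4 * |p 0 ⬝ᵥ u| :=
      mul_pos (by linarith [hβpos 0, hβpos 1]) habspos
    linarith
  refine ⟨hvc0, ?_⟩
  have hvne : v ≠ 0 := by
    intro h
    rw [h, dotProduct_zero] at hvc0
    exact hvc0 rfl
  set B' := (p 0 ⬝ᵥ v) ^ 2 / β 0 with hB'
  have hsβ0 : (0:ℝ) < Real.sqrt (β 0) := Real.sqrt_pos.mpr (hβpos 0)
  have hsB : Real.sqrt B = |p 0 ⬝ᵥ u| / Real.sqrt (β 0) := by
    rw [hB, Real.sqrt_div (sq_nonneg _), Real.sqrt_sq_eq_abs]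
  have hsB' : Real.sqrt B' = |p 0 ⬝ᵥ v| / Real.sqrt (β 0) := by
    rw [hB', Real.sqrt_div (sq_nonneg _), Real.sqrt_sq_eq_abs]
  have hB'ge : (3 * β 0 + β 1) / 4 * Real.sqrt B ≤ Real.sqrt B' := by
    rw [hsB, hsB', ← mul_div_assoc]
    gcongr
  have hsBpos : 0 < Real.sqrt B := Real.sqrt_pos.mpr hB0
  have hcoefpos : (0:ℝ) < (3 * β 0 + β 1) / 4 := by linarith [hβpos 0, hβpos 1]
  have hcoefpos2 : (0:ℝ) ≤ (β 0 + 3 * β 1) / 4 := by linarith [hβpos 0, hβpos 1]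
  have hB'pos : 0 < Real.sqrt B' := lt_of_lt_of_le (mul_pos hcoefpos hsBpos) hB'ge
  rw [Gpot_eq β p hvne, Gpot_eq β p hu, ← hA, ← hB, ← hA', ← hB']
  have hfin : Real.sqrt A' / Real.sqrt B' ≤
      ((β 0 + 3 * β 1) / 4 * Real.sqrt A) / ((3 * β 0 + β 1) / 4 * Real.sqrt B) :=
    div_le_div₀ (mul_nonneg hcoefpos2 (Real.sqrt_nonneg _)) hnum
      (mul_pos hcoefpos hsBpos) hB'ge
  refine hfin.trans ?_
  have hc3 : (0:ℝ) < 3 * β 0 + β 1 := by linarith [hβpos 0, hβpos 1]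
  have heq2 : ((β 0 + 3 * β 1) / 4 * Real.sqrt A) / ((3 * β 0 + β 1) / 4 * Real.sqrt B)
      = (β 0 + 3 * β 1) / (3 * β 0 + β 1) * (Real.sqrt A / Real.sqrt B) := by
    field_simp
  rw [heq2]
  apply mul_le_mul_of_nonneg_right ?_ (div_nonneg (Real.sqrt_nonneg _) (Real.sqrt_nonneg _))
  rw [div_le_div_iff₀ hc3 (by norm_num)]
  linarith [hβpos 1]


include hβpos horth in
lemma sinbound (hanti : Antitone β) {r : Fin (d+2) → ℝ} (hr : r ≠ 0) (hc0 : p 0 ⬝ᵥ r ≠ 0) :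
    Real.sqrt (∑ i ∈ Finset.univ.erase 0, (xi p r i) ^ 2) ≤ Gpot β p r := by
  set S := ∑ i ∈ Finset.univ.erase 0, (xi p r i) ^ 2 with hS
  have hn := vnorm_pos hr
  have hS0 : 0 ≤ S := Finset.sum_nonneg fun i _ => sq_nonneg _
  have hnum : S / β 0 ≤ ∑ i ∈ Finset.univ.erase 0, (xi p r i) ^ 2 / β i := by
    rw [hS, Finset.sum_div]
    refine Finset.sum_le_sum fun i _ => ?_
    exact div_le_div_of_nonneg_left (sq_nonneg _) (hβpos i) (hanti (Fin.zero_le i))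
  have hxi0 : (xi p r 0) ^ 2 ≤ 1 := by
    have hpar : r ⬝ᵥ r = ∑ i, (p i ⬝ᵥ r) ^ 2 := by
      rw [parseval p horth r r]
      exact Finset.sum_congr rfl fun i _ => (sq _).symm
    have h1 : (p 0 ⬝ᵥ r) ^ 2 ≤ r ⬝ᵥ r := by
      rw [hpar]
      exact Finset.single_le_sum (f := fun i => (p i ⬝ᵥ r) ^ 2)
        (fun i _ => sq_nonneg _) (Finset.mem_univ 0)
    have hvn : (vnorm r) ^ 2 = r ⬝ᵥ r :=
      Real.sq_sqrt (Finset.sum_nonneg fun i _ => mul_self_nonneg _)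
    unfold xi
    rw [div_pow, div_le_one (by positivity)]
    rw [hvn]
    exact h1
  have hden : (xi p r 0) ^ 2 / β 0 ≤ 1 / β 0 :=
    (div_le_div_iff_of_pos_right (hβpos 0)).mpr hxi0
  have hxi0ne : xi p r 0 ≠ 0 := div_ne_zero hc0 hn.ne'
  have hdenpos : 0 < (xi p r 0) ^ 2 / β 0 :=
    div_pos (lt_of_le_of_ne (sq_nonneg _) (Ne.symm (pow_ne_zero 2 hxi0ne))) (hβpos 0)
  have hmain : Real.sqrt (S / β 0) / Real.sqrt (1 / β 0) ≤ Gpot β p r :=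
    div_le_div₀ (Real.sqrt_nonneg _) (Real.sqrt_le_sqrt hnum)
      (Real.sqrt_pos.mpr hdenpos) (Real.sqrt_le_sqrt hden)
  have hsβ0 : (0:ℝ) < Real.sqrt (β 0) := Real.sqrt_pos.mpr (hβpos 0)
  have heq : Real.sqrt (S / β 0) / Real.sqrt (1 / β 0) = Real.sqrt S := by
    rw [Real.sqrt_div hS0, one_div, Real.sqrt_inv, div_inv_eq_mul,
      div_mul_cancel₀ _ hsβ0.ne']
  rw [← heq]
  exact hmain

end

/-- linear convergence of inexact shift-and-invert power iterations:
if each least squares problem is solved to the required accuracy, then `G(r_t)`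
(and hence `|sin θ_t|`) drops below `η` as soon as `(5/7)^t G(r₀) ≤ η`. -/
theorem stmt_6 {d : ℕ} (M : Matrix (Fin (d+2)) (Fin (d+2)) ℝ) (hM : M.PosDef)
    (β : Fin (d+2) → ℝ) (p : Fin (d+2) → Fin (d+2) → ℝ)
    (hβpos : ∀ i, 0 < β i) (hanti : Antitone β) (hgap : β 1 < β 0)
    (hhalf : 2 * β 1 ≤ β 0)
    (horth : ∀ i j, p i ⬝ᵥ p j = if i = j then 1 else 0)
    (heig : ∀ i, M.mulVec (p i) = β i • p i)
    (r : ℕ → Fin (d+2) → ℝ) (hrne : ∀ t, r t ≠ 0) (hr0 : p 0 ⬝ᵥ r 0 ≠ 0)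
    (hstep : ∀ t : ℕ, ∃ ε : ℝ, 0 ≤ ε ∧
        ε ≤ min (∑ i ∈ Finset.univ.erase 0, (xi p (r t) i) ^ 2 / β i)
              ((xi p (r t) 0) ^ 2 / β 0) * (β 0 - β 1) ^ 2 / 32 ∧
        Real.sqrt ((r (t+1) - M.mulVec (r t)) ⬝ᵥ (M⁻¹).mulVec (r (t+1) - M.mulVec (r t)))
          ≤ Real.sqrt (2 * ε) * vnorm (r t)) :
    ∀ η : ℝ, η ∈ Set.Ioo (0 : ℝ) 1 → ∀ t : ℕ, ((5 : ℝ)/7) ^ t * Gpot β p (r 0) ≤ η →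
      p 0 ⬝ᵥ r t ≠ 0 ∧
      Real.sqrt (∑ i ∈ Finset.univ.erase 0, (xi p (r t) i) ^ 2) ≤ Gpot β p (r t) ∧
      Gpot β p (r t) ≤ η := by
  have key : ∀ t : ℕ, p 0 ⬝ᵥ r t ≠ 0 ∧ Gpot β p (r t) ≤ (5/7 : ℝ)^t * Gpot β p (r 0) := by
    intro t
    induction t with
    | zero => exact ⟨hr0, by norm_num⟩
    | succ t ih =>
      obtain ⟨ε, hε0, hεle, herr⟩ := hstep t
      obtain ⟨h1, h2⟩ := step M hM β p hβpos horth heig hanti hgap hhalf (r t) (r (t+1))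
        (hrne t) ih.1 ε hε0 hεle herr
      refine ⟨h1, ?_⟩
      calc Gpot β p (r (t+1)) ≤ 5/7 * Gpot β p (r t) := h2
      _ ≤ 5/7 * ((5/7 : ℝ)^t * Gpot β p (r 0)) :=
          mul_le_mul_of_nonneg_left ih.2 (by norm_num)
      _ = (5/7 : ℝ)^(t+1) * Gpot β p (r 0) := by ring
  intro η hη t ht
  exact ⟨(key t).1, sinbound β p hβpos horth hanti (hrne t) (key t).1,
    le_trans (key t).2 ht⟩
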